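/- Let f : [0,L]×ℝ → ℝ be continuous and compactly supported in its second argument. Then the electric field defined by the kernel formula has zero integral mean: ∫₀^L E(f,x) dx = 0. -/

import Mathlib

open MeasureTheory Real Set

/-- The electric field determined by the density `f` via the kernel
`K(x,y) = y/L` for `y < x` and `K(x,y) = y/L - 1` for `y > x`. -/
noncomputable def Efield (L : ℝ) (f : ℝ → ℝ → ℝ) (x : ℝ) : ℝ :=
  ∫ y in (0:ℝ)..L, (if y < x then y / L else y / L - 1) * ((∫ v : ℝ, f y v) - 1)

/-- For `f` continuous on `[0,L] × ℝ` and compactly supported in its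
second argument, the electric field defined by the kernel formula has zero integral
mean: `∫₀^L E(f,x) dx = 0`. -/
theorem efield_zero_mean
    (L : ℝ) (hL : 0 < L) (f : ℝ → ℝ → ℝ)
    (hf_cont : ContinuousOn (fun p : ℝ × ℝ => f p.1 p.2)
      (Set.Icc 0 L ×ˢ (Set.univ : Set ℝ)))
    (hf_supp : ∃ R : ℝ, ∀ x v, R ≤ |v| → f x v = 0) :
    (∫ x in (0:ℝ)..L, Efield L f x) = 0 := by
  obtain ⟨R, hR⟩ := hf_supp
  set R₀ : ℝ := max R 0 with hR₀def
  have hR₀ : ∀ x v, v ∉ Icc (-R₀) R₀ → f x v = 0 := by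
    intro x v hv
    apply hR
    rw [mem_Icc, not_and_or] at hv
    rcases hv with h | h
    · push_neg at h
      calc R ≤ R₀ := le_max_left _ _
        _ ≤ -v := by linarith
        _ ≤ |v| := neg_le_abs v
    · push_neg at h
      exact le_trans (le_max_left _ _) (le_trans h.le (le_abs_self v))
  obtain ⟨M, hM⟩ :=
    ((isCompact_Icc (a := (0:ℝ)) (b := L)).prod
      (isCompact_Icc (a := -R₀) (b := R₀))).exists_bound_of_continuousOn
      (hf_cont.mono (fun p hp => ⟨hp.1, mem_univ _⟩))
  set g : ℝ → ℝ := fun y => (∫ v : ℝ, f y v) - 1 with hgdef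
  have hfy_cont : ∀ y ∈ Icc (0:ℝ) L, Continuous (fun v => f y v) := by
    intro y hy
    rw [← continuousOn_univ]
    exact hf_cont.comp (Continuous.prodMk_right y).continuousOn (fun v _ => ⟨hy, mem_univ v⟩)
  have hint_cont : ContinuousOn (fun y => ∫ v : ℝ, f y v) (Icc 0 L) := by
    apply continuousOn_of_dominated (bound := (Icc (-R₀) R₀).indicator fun _ => max M 0)
    · intro y hy
      exact (hfy_cont y hy).aestronglyMeasurable
    · intro y hy
      refine Filter.Eventually.of_forall fun v => ?_
      by_cases hv : v ∈ Icc (-R₀) R₀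
      · rw [Set.indicator_of_mem hv]
        exact le_trans (hM (y, v) ⟨hy, hv⟩) (le_max_left _ _)
      · rw [Set.indicator_of_notMem hv, hR₀ y v hv]
        simp
    · exact (integrableOn_const measure_Icc_lt_top.ne).integrable_indicator
        measurableSet_Icc
    · refine Filter.Eventually.of_forall fun v => ?_
      exact hf_cont.comp ((continuous_id.prodMk continuous_const).continuousOn)
        (fun y hy => ⟨hy, mem_univ v⟩)
  have hg_cont : ContinuousOn g (Icc 0 L) := hint_cont.sub continuousOn_const
  obtain ⟨C, hC⟩ := isCompact_Icc.exists_bound_of_continuousOn hg_cont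
  have hKmeas : Measurable (fun p : ℝ × ℝ => if p.2 < p.1 then p.2 / L else p.2 / L - 1) := by
    apply Measurable.ite (measurableSet_lt measurable_snd measurable_fst)
    · exact measurable_snd.div_const L
    · exact (measurable_snd.div_const L).sub measurable_const
  set μ : Measure ℝ := volume.restrict (Ioc (0:ℝ) L) with hμdef
  haveI : IsFiniteMeasure μ := ⟨by rw [Measure.restrict_apply_univ]; exact measure_Ioc_lt_top⟩
  have hprod : μ.prod μ = (volume.prod volume).restrict (Ioc (0:ℝ) L ×ˢ Ioc (0:ℝ) L) :=
    Measure.prod_restrict _ _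
  have hInt : Integrable
      (Function.uncurry fun x y => (if y < x then y / L else y / L - 1) * g y) (μ.prod μ) := by
    refine Integrable.mono' (integrable_const (1 * |C| : ℝ)) ?_ ?_
    · rw [hprod]
      refine AEStronglyMeasurable.mul ?_ ?_
      · exact hKmeas.aestronglyMeasurable.restrict
      · exact ((hg_cont.comp continuous_snd.continuousOn
          (fun p hp => Ioc_subset_Icc_self hp.2)).aestronglyMeasurable
          (measurableSet_Ioc.prod measurableSet_Ioc))
    · rw [hprod]
      filter_upwards [ae_restrict_mem (measurableSet_Ioc.prod measurableSet_Ioc)] with p hp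
      have hy := hp.2
      have h1 : 0 < p.2 / L := div_pos hy.1 hL
      have h2 : p.2 / L ≤ 1 := (div_le_one hL).mpr hy.2
      have hK1 : |if p.2 < p.1 then p.2 / L else p.2 / L - 1| ≤ 1 := by
        split <;> rw [abs_le] <;> constructor <;> linarith
      have hg1 : |g p.2| ≤ |C| :=
        le_trans (hC p.2 (Ioc_subset_Icc_self hy)) (le_abs_self C)
      calc ‖(if p.2 < p.1 then p.2 / L else p.2 / L - 1) * g p.2‖
          = |if p.2 < p.1 then p.2 / L else p.2 / L - 1| * |g p.2| := abs_mul _ _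
        _ ≤ 1 * |C| := mul_le_mul hK1 hg1 (abs_nonneg _) zero_le_one
  have key : ∀ y ∈ Ioc (0:ℝ) L,
      (∫ x in Ioc (0:ℝ) L, (if y < x then y / L else y / L - 1)) = 0 := by
    intro y hy
    have hsplit : Ioc (0:ℝ) L = Ioc 0 y ∪ Ioc y L :=
      (Ioc_union_Ioc_eq_Ioc hy.1.le hy.2).symm
    have e1 : EqOn (fun x => if y < x then y / L else y / L - 1) (fun _ => y / L - 1)
        (Ioc 0 y) := fun x hx => if_neg (not_lt.mpr hx.2)
    have e2 : EqOn (fun x => if y < x then y / L else y / L - 1) (fun _ => y / L)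
        (Ioc y L) := fun x hx => if_pos hx.1
    have i1 : IntegrableOn (fun x => if y < x then y / L else y / L - 1) (Ioc 0 y) :=
      (integrableOn_const measure_Ioc_lt_top.ne).congr_fun e1.symm measurableSet_Ioc
    have i2 : IntegrableOn (fun x => if y < x then y / L else y / L - 1) (Ioc y L) :=
      (integrableOn_const measure_Ioc_lt_top.ne).congr_fun e2.symm measurableSet_Ioc
    rw [hsplit, setIntegral_union (Ioc_disjoint_Ioc_of_le le_rfl) measurableSet_Ioc i1 i2,
      setIntegral_congr_fun measurableSet_Ioc e1, setIntegral_congr_fun measurableSet_Ioc e2,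
      setIntegral_const, setIntegral_const, Real.volume_real_Ioc_of_le hy.1.le, Real.volume_real_Ioc_of_le hy.2, smul_eq_mul, smul_eq_mul]
    field_simp
    ring
  calc (∫ x in (0:ℝ)..L, Efield L f x)
      = ∫ x in Ioc (0:ℝ) L, ∫ y in Ioc (0:ℝ) L,
          (if y < x then y / L else y / L - 1) * g y := by
        rw [intervalIntegral.integral_of_le hL.le]
        refine setIntegral_congr_fun measurableSet_Ioc fun x hx => ?_
        unfold Efield
        rw [intervalIntegral.integral_of_le hL.le]
    _ = ∫ y in Ioc (0:ℝ) L, ∫ x in Ioc (0:ℝ) L,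
          (if y < x then y / L else y / L - 1) * g y := integral_integral_swap hInt
    _ = ∫ y in Ioc (0:ℝ) L, (0:ℝ) := by
        refine setIntegral_congr_fun measurableSet_Ioc fun y hy => ?_
        rw [integral_mul_const, key y hy, zero_mul]
    _ = 0 := integral_zero _ _
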